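/- Let I ⊆ ℝ be a nonempty open interval, f : I → ℝ, and n ∈ ℕ with n ≥ 2. If f((x₁+⋯+xₙ)/n) ≤ (1/n)∑_{i=1}^n f((x₁+⋯+xₙ−x_i)/(n−1)) holds for all x₁,…,xₙ ∈ I, then f is Jensen convex on I. -/

import Mathlib

open Finset

lemma star_aux (I : Set ℝ) (hconv : Convex ℝ I) (f : ℝ → ℝ) (n : ℕ) (hn : 2 ≤ n)
    (hineq : ∀ x : Fin n → ℝ, (∀ i, x i ∈ I) →
      f ((∑ i, x i) / n) ≤ (1 / n) * ∑ i, f (((∑ j, x j) - x i) / ((n : ℝ) - 1)))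
    (c s : ℝ) (h1 : c + ((n:ℝ)-1)*s ∈ I) (h2 : c - ((n:ℝ)-1)*s ∈ I) :
    2 * f c ≤ f (c - s) + f (c + s) := by
  have hn1 : (1:ℝ) ≤ (n:ℝ) - 1 := by
    have : (2:ℝ) ≤ (n:ℝ) := by exact_mod_cast hn
    linarith
  have hnpos : (0:ℝ) < (n:ℝ) := by linarith
  have hc : c ∈ I := by
    have := hconv h1 h2 (by norm_num : (0:ℝ) ≤ 1/2) (by norm_num : (0:ℝ) ≤ 1/2) (by norm_num)
    have e : ((1:ℝ)/2) • (c + ((n:ℝ)-1)*s) + ((1:ℝ)/2) • (c - ((n:ℝ)-1)*s) = c := by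
      rw [smul_eq_mul, smul_eq_mul]; ring
    rwa [e] at this
  set E := ((n:ℝ)-1)*s with hE
  set i0 : Fin n := ⟨0, by omega⟩ with hi0
  set i1 : Fin n := ⟨1, by omega⟩ with hi1
  have hi01 : i0 ≠ i1 := by
    simp [hi0, hi1, Fin.ext_iff]
  set x : Fin n → ℝ := fun i => if i = i0 then c + E else if i = i1 then c - E else c with hx
  have hxI : ∀ i, x i ∈ I := by
    intro i
    by_cases h : i = i0
    · simpa [hx, h] using h1
    · by_cases h' : i = i1
      · simpa [hx, h, h', hi01.symm] using h2
      · simpa [hx, h, h'] using hc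
  have h10 : i1 ≠ i0 := Ne.symm hi01
  have hxeq : ∀ i, x i = c + ((if i = i0 then E else 0) + (if i = i1 then -E else 0)) := by
    intro i
    by_cases h : i = i0
    · subst h
      simp [hx, hi01]
    · by_cases h' : i = i1
      · subst h'
        simp [hx, h10, sub_eq_add_neg]
      · simp [hx, h, h']
  have hsum : ∑ i, x i = (n:ℝ) * c := by
    rw [Finset.sum_congr rfl (fun i _ => hxeq i)]
    simp [Finset.sum_add_distrib, Finset.sum_ite_eq', Finset.card_univ, mul_comm]
  have hnz : ((n:ℝ) - 1) ≠ 0 := by linarith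
  have harg : ∀ i, ((∑ j, x j) - x i) / ((n:ℝ) - 1)
      = c + ((if i = i0 then -s else 0) + (if i = i1 then s else 0)) := by
    intro i
    rw [hsum]
    by_cases h : i = i0
    · subst h
      simp only [hx, if_pos rfl, if_neg hi01, if_true, hE]
      field_simp
      ring
    · by_cases h' : i = i1
      · subst h'
        simp only [hx, if_neg h10, if_pos rfl, if_true, hE]
        field_simp
        ring
      · simp only [hx, if_neg h, if_neg h']
        field_simp
        ring
  have hfsum : ∑ i, f (((∑ j, x j) - x i) / ((n:ℝ) - 1))
      = (n:ℝ) * f c + (f (c - s) - f c) + (f (c + s) - f c) := by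
    have key : ∀ i, f (((∑ j, x j) - x i) / ((n:ℝ) - 1))
        = f c + ((if i = i0 then f (c - s) - f c else 0) + (if i = i1 then f (c + s) - f c else 0)) := by
      intro i
      rw [harg i]
      by_cases h : i = i0
      · subst h
        rw [if_pos rfl, if_pos rfl, if_neg hi01, if_neg hi01,
          show c + (-s + 0) = c - s by ring]
        ring
      · by_cases h' : i = i1
        · subst h'
          rw [if_neg h10, if_neg h10, if_pos rfl, if_pos rfl,
            show c + (0 + s) = c + s by ring]
          ring
        · simp [h, h']
    rw [Finset.sum_congr rfl (fun i _ => key i)]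
    simp [Finset.sum_add_distrib, Finset.sum_ite_eq', Finset.card_univ, mul_comm]
    ring
  have hmain := hineq x hxI
  rw [hfsum, hsum] at hmain
  have hfc : (n:ℝ) * c / (n:ℝ) = c := by field_simp
  rw [hfc] at hmain
  have : f c ≤ (1/(n:ℝ)) * ((n:ℝ) * f c + (f (c - s) - f c) + (f (c + s) - f c)) := hmain
  have hn0 : (n:ℝ) ≠ 0 := ne_of_gt hnpos
  have h' := mul_le_mul_of_nonneg_left this (le_of_lt hnpos)
  rw [show (n:ℝ) * (1/(n:ℝ) * ((n:ℝ) * f c + (f (c - s) - f c) + (f (c + s) - f c)))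
      = (n:ℝ) * f c + (f (c - s) - f c) + (f (c + s) - f c) from by field_simp] at h'
  linarith
theorem stmt_13 (I : Set ℝ) (hne : I.Nonempty) (hop : IsOpen I) (hconv : Convex ℝ I)
    (f : ℝ → ℝ) (n : ℕ) (hn : 2 ≤ n)
    (hineq : ∀ x : Fin n → ℝ, (∀ i, x i ∈ I) →
      f ((∑ i, x i) / n) ≤ (1 / n) * ∑ i, f (((∑ j, x j) - x i) / ((n : ℝ) - 1))) :
    ∀ u ∈ I, ∀ v ∈ I, f ((u + v) / 2) ≤ (f u + f v) / 2 := by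
  have star := star_aux I hconv f n hn hineq
  have key : ∀ u ∈ I, ∀ v ∈ I, u ≤ v → f ((u + v) / 2) ≤ (f u + f v) / 2 := by
    intro u hu v hv huv
    have hn2 : (2:ℝ) ≤ (n:ℝ) := by exact_mod_cast hn
    obtain ⟨ε1, hε1, hb1⟩ := Metric.isOpen_iff.mp hop u hu
    obtain ⟨ε2, hε2, hb2⟩ := Metric.isOpen_iff.mp hop v hv
    set ε := min ε1 ε2 with hεdef
    have hε : 0 < ε := lt_min hε1 hε2
    have Hmem : ∀ r : ℝ, u - ε < r → r < v + ε → r ∈ I := by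
      intro r hr1 hr2
      rcases lt_or_ge r u with h | h
      · apply hb1
        rw [Metric.mem_ball, Real.dist_eq, abs_lt]
        constructor <;> [skip; skip] <;>
          · have := min_le_left ε1 ε2; linarith
      · rcases le_or_gt r v with h' | h'
        · exact hconv.ordConnected.out hu hv ⟨h, h'⟩
        · apply hb2
          rw [Metric.mem_ball, Real.dist_eq, abs_lt]
          constructor <;>
            · have := min_le_right ε1 ε2; linarith
    obtain ⟨N, hN⟩ := exists_nat_gt ((n:ℝ) * (v - u) / (2 * ε))
    set N' := N + 1 with hN'def
    have hN'pos : (0:ℝ) < (N':ℝ) := by positivity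
    set δ := (v - u) / (2 * (N':ℝ)) with hδdef
    have hδ0 : 0 ≤ δ := by
      apply div_nonneg (by linarith) (by positivity)
    have hδε : ((n:ℝ) - 1) * δ < ε := by
      have h1 : (n:ℝ) * (v - u) < N * (2 * ε) := (div_lt_iff₀ (by positivity)).mp hN
      have hNN : (N:ℝ) ≤ (N':ℝ) := by
        rw [hN'def]; push_cast; linarith
      have hvu : (0:ℝ) ≤ v - u := by linarith
      calc ((n:ℝ) - 1) * δ = (((n:ℝ) - 1) * (v - u)) / (2 * (N':ℝ)) := by
            rw [hδdef]; ring
        _ < ε := by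
            rw [div_lt_iff₀ (by positivity)]
            nlinarith
    set m := (u + v) / 2 with hmdef
    have hum : u ≤ m := by rw [hmdef]; linarith
    have hmv : m ≤ v := by rw [hmdef]; linarith
    set g : ℕ → ℝ := fun j => f (m + j * δ) + f (m - j * δ) with hgdef
    have hnd0 : (0:ℝ) ≤ ((n:ℝ) - 1) * δ := mul_nonneg (by linarith) hδ0
    have hNδ : (N':ℝ) * δ = (v - u) / 2 := by
      rw [hδdef]
      field_simp
    have hstep : ∀ j : ℕ, j < N' → g j ≤ g (j + 1) := by
      intro j
      induction j with
      | zero =>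
        intro _
        have h1 : m + ((n:ℝ) - 1) * δ ∈ I := by
          apply Hmem <;> linarith
        have h2 : m - ((n:ℝ) - 1) * δ ∈ I := by
          apply Hmem <;> linarith
        have hs := star m δ h1 h2
        simp only [hgdef]
        norm_num
        linarith
      | succ j ih =>
        intro hj
        have hj' : j < N' := by omega
        have hgj := ih hj'
        have hjN : (j:ℝ) + 1 ≤ (N':ℝ) - 1 := by
          have h2 : j + 2 ≤ N' := by omega
          have h3 : ((j:ℝ) + 2) ≤ (N':ℝ) := by exact_mod_cast h2
          linarith
        have hjd : ((j:ℝ) + 1) * δ ≤ ((N':ℝ) - 1) * δ := by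
          exact mul_le_mul_of_nonneg_right hjN hδ0
        have hub : ((N':ℝ) - 1) * δ = (v - u) / 2 - δ := by
          rw [sub_mul, one_mul, hNδ]
        have hjd' : ((j:ℝ) + 1) * δ ≤ (v - u) / 2 - δ := by rw [hub] at hjd; exact hjd
        have hjd0 : 0 ≤ ((j:ℝ) + 1) * δ := by positivity
        have s1 := star (m + ((j:ℝ) + 1) * δ) δ
          (Hmem _ (by linarith) (by linarith)) (Hmem _ (by linarith) (by linarith))
        have s2 := star (m - ((j:ℝ) + 1) * δ) δ
          (Hmem _ (by linarith) (by linarith)) (Hmem _ (by linarith) (by linarith))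
        rw [show m + ((j:ℝ) + 1) * δ - δ = m + (j:ℝ) * δ by ring,
          show m + ((j:ℝ) + 1) * δ + δ = m + ((j:ℝ) + 1 + 1) * δ by ring] at s1
        rw [show m - ((j:ℝ) + 1) * δ - δ = m - ((j:ℝ) + 1 + 1) * δ by ring,
          show m - ((j:ℝ) + 1) * δ + δ = m - (j:ℝ) * δ by ring] at s2
        simp only [hgdef] at hgj ⊢
        push_cast at hgj ⊢
        linarith
    have mono : ∀ j : ℕ, j ≤ N' → g 0 ≤ g j := by
      intro j
      induction j with
      | zero => intro _; exact le_refl _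
      | succ j ih =>
        intro hj
        have h1 : j ≤ N' := by omega
        have h2 : j < N' := by omega
        exact le_trans (ih h1) (hstep j h2)
    have hfin := mono N' le_rfl
    have hg0 : g 0 = 2 * f m := by
      simp only [hgdef, Nat.cast_zero, zero_mul, add_zero, sub_zero]
      ring
    have hgN : g N' = f v + f u := by
      simp only [hgdef]
      rw [hNδ]
      rw [show m + (v - u) / 2 = v by rw [hmdef]; ring,
        show m - (v - u) / 2 = u by rw [hmdef]; ring]
    rw [hg0, hgN] at hfin
    rw [hmdef] at hfin
    linarith
  intro u hu v hv
  rcases le_total u v with h | h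
  · exact key u hu v hv h
  · have := key v hv u hu h
    rw [show u + v = v + u from add_comm u v]
    linarith
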